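/- Under the assumptions of the previous statement (ξⱼ' ≥ λ pointwise), the expected count E_P[#{j : tⱼ ≤ t}] satisfies E_P[#{j : tⱼ ≤ t}] ≤ n·(exp(λt) − 1)/(exp(λ) − 1) for every t ∈ [0,1] (with the right side equal to n·t when λ = 0). -/

import Mathlib

open Set Real MeasureTheory

def orderedSimplex (n : ℕ) : Set (Fin n → ℝ) :=
  {t | (∀ j, t j ∈ Set.Icc (0:ℝ) 1) ∧ StrictMono t}

noncomputable def piExt (l t : ℝ) : ℝ :=
  if l = 0 then t else (Real.exp (l * t) - 1) / (Real.exp l - 1)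

namespace S11
open intervalIntegral
open scoped Interval


noncomputable def QI : List (ℝ → ℝ) → ℝ → ℝ → ℝ
  | [], _, _ => 1
  | f :: fs, c, d => ∫ u in c..d, f u * QI fs u d

@[simp] lemma QI_nil (c d : ℝ) : QI [] c d = 1 := rfl

lemma QI_cons (f : ℝ → ℝ) (fs : List (ℝ → ℝ)) (c d : ℝ) :
    QI (f :: fs) c d = ∫ u in c..d, f u * QI fs u d := rfl

def Ok (C : ℝ) (fs : List (ℝ → ℝ)) : Prop :=
  ∀ f ∈ fs, Measurable f ∧ ∀ x, |f x| ≤ C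

lemma Ok.tail {C f fs} (h : Ok C (f :: fs)) : Ok C fs :=
  fun g hg => h g (List.mem_cons_of_mem _ hg)

lemma Ok.head {C f fs} (h : Ok C (f :: fs)) : Measurable f ∧ ∀ x, |f x| ≤ C :=
  h f (List.mem_cons_self)

lemma QI_nonneg {fs : List (ℝ → ℝ)} (h : ∀ f ∈ fs, ∀ x, 0 ≤ f x) :
    ∀ {c d : ℝ}, c ≤ d → 0 ≤ QI fs c d := by
  induction fs with
  | nil => intro c d _; simp
  | cons f fs ih =>
    intro c d hcd
    rw [QI_cons]
    refine intervalIntegral.integral_nonneg hcd (fun u hu => ?_)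
    exact mul_nonneg (h f (List.mem_cons_self) u)
      (ih (fun g hg => h g (List.mem_cons_of_mem _ hg)) hu.2)

lemma QI_bound {C : ℝ} (hC : 1 ≤ C) {fs : List (ℝ → ℝ)} (h : Ok C fs) :
    ∀ {c d : ℝ}, c ∈ Icc (0:ℝ) 1 → d ∈ Icc (0:ℝ) 1 → |QI fs c d| ≤ C ^ fs.length := by
  induction fs with
  | nil => intro c d _ _; simpa using hC
  | cons f fs ih =>
    intro c d hc hd
    rw [QI_cons]
    have hb : ∀ x ∈ Ι c d, ‖f x * QI fs x d‖ ≤ C * C ^ fs.length := by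
      intro x hx
      have hx' : x ∈ Icc (0:ℝ) 1 := by
        rw [Set.mem_uIoc] at hx
        rcases hx with ⟨h1, h2⟩ | ⟨h1, h2⟩ <;>
          exact ⟨by linarith [hc.1, hd.1], by linarith [hc.2, hd.2]⟩
      have h1 := (h.head).2 x
      have h2 := ih h.tail hx' hd
      calc ‖f x * QI fs x d‖ = |f x| * |QI fs x d| := by rw [Real.norm_eq_abs, abs_mul]
        _ ≤ C * C ^ fs.length := by
            apply mul_le_mul h1 h2 (abs_nonneg _) (le_trans (by norm_num) hC)
    have := intervalIntegral.norm_integral_le_of_norm_le_const hb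
    rw [Real.norm_eq_abs] at this
    calc |∫ u in c..d, f u * QI fs u d| ≤ C * C ^ fs.length * |d - c| := this
      _ ≤ C * C ^ fs.length * 1 := by
          apply mul_le_mul_of_nonneg_left _ (by positivity)
          rw [abs_sub_le_iff]
          constructor <;> nlinarith [hc.1, hc.2, hd.1, hd.2]
      _ = C ^ (fs.length + 1) := by ring
    
lemma QI_measurable {C : ℝ} {fs : List (ℝ → ℝ)} (h : Ok C fs) :
    Measurable fun p : ℝ × ℝ => QI fs p.1 p.2 := by
  induction fs with
  | nil => simpa using measurable_const
  | cons f fs ih =>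
    have meas_part : ∀ (π₁ π₂ : ℝ × ℝ → ℝ), Measurable π₁ → Measurable π₂ →
        Measurable fun p : ℝ × ℝ => ∫ u in Set.Ioc (π₁ p) (π₂ p), f u * QI fs u p.2 := by
      intro π₁ π₂ h₁ h₂
      set Φ : (ℝ × ℝ) × ℝ → ℝ := fun q =>
        if q.2 ∈ Set.Ioc (π₁ q.1) (π₂ q.1) then f q.2 * QI fs q.2 q.1.2 else 0 with hΦ
      have hΦm : Measurable Φ := by
        apply Measurable.ite
        · have : {q : (ℝ × ℝ) × ℝ | q.2 ∈ Set.Ioc (π₁ q.1) (π₂ q.1)}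
              = {q | π₁ q.1 < q.2} ∩ {q | q.2 ≤ π₂ q.1} := by
            ext q; simp [Set.mem_Ioc, Set.mem_setOf_eq]
          rw [this]
          exact ((measurableSet_lt (h₁.comp measurable_fst) measurable_snd)).inter
            (measurableSet_le measurable_snd (h₂.comp measurable_fst))
        · exact ((h.head.1.comp measurable_snd)).mul
            ((ih h.tail).comp ((measurable_snd).prodMk (measurable_fst.snd)))
        · exact measurable_const
      have := (MeasureTheory.StronglyMeasurable.integral_prod_right' (ν := volume) hΦm.stronglyMeasurable).measurable
      convert this using 1
      funext p
      rw [← MeasureTheory.integral_indicator measurableSet_Ioc]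
      congr 1
      funext u
      simp [Set.indicator_apply, hΦ]
    have : (fun p : ℝ × ℝ => QI (f :: fs) p.1 p.2) = fun p =>
        (∫ u in Set.Ioc p.1 p.2, f u * QI fs u p.2)
          - ∫ u in Set.Ioc p.2 p.1, f u * QI fs u p.2 := by
      funext p; rw [QI_cons]; rfl
    rw [this]
    exact (meas_part _ _ measurable_fst measurable_snd).sub
      (meas_part _ _ measurable_snd measurable_fst)

lemma mem01_of_uIoc {a b x : ℝ} (ha : a ∈ Icc (0:ℝ) 1) (hb : b ∈ Icc (0:ℝ) 1)
    (hx : x ∈ Ι a b) : x ∈ Icc (0:ℝ) 1 := by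
  rw [Set.mem_uIoc] at hx
  rcases hx with ⟨h1, h2⟩ | ⟨h1, h2⟩ <;>
    exact ⟨by linarith [ha.1, hb.1], by linarith [ha.2, hb.2]⟩

lemma II_of_bound {F : ℝ → ℝ} (hF : Measurable F) {M : ℝ} (a b : ℝ)
    (hb : ∀ x ∈ Ι a b, |F x| ≤ M) : IntervalIntegrable F volume a b := by
  rw [intervalIntegrable_iff]
  apply Measure.integrableOn_of_bounded (M := M)
  · rw [Set.uIoc]; exact measure_Ioc_lt_top.ne
  · exact hF.aestronglyMeasurable
  · exact (ae_restrict_iff' measurableSet_uIoc).mpr (ae_of_all _ fun x hx => by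
      rw [Real.norm_eq_abs]; exact hb x hx)

lemma QI_intInt {C : ℝ} (hC : 1 ≤ C) {f : ℝ → ℝ} {fs : List (ℝ → ℝ)}
    (hok : Ok C (f :: fs)) {d a b : ℝ} (hd : d ∈ Icc (0:ℝ) 1)
    (ha : a ∈ Icc (0:ℝ) 1) (hb : b ∈ Icc (0:ℝ) 1) :
    IntervalIntegrable (fun u => f u * QI fs u d) volume a b := by
  apply II_of_bound (M := C * C ^ fs.length)
  · exact hok.head.1.mul
      ((QI_measurable hok.tail).comp (measurable_id.prodMk measurable_const))
  · intro x hx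
    have hx' := mem01_of_uIoc ha hb hx
    rw [abs_mul]
    exact mul_le_mul (hok.head.2 x) (QI_bound hC hok.tail hx' hd) (abs_nonneg _)
      (le_trans zero_le_one hC)

lemma QI_lip {C : ℝ} (hC : 1 ≤ C) {fs : List (ℝ → ℝ)} (h : Ok C fs) :
    ∀ {c d c' d' : ℝ}, c ∈ Icc (0:ℝ) 1 → d ∈ Icc (0:ℝ) 1 → c' ∈ Icc (0:ℝ) 1 →
      d' ∈ Icc (0:ℝ) 1 →
    |QI fs c d - QI fs c' d'| ≤ fs.length * C ^ fs.length * (|c - c'| + |d - d'|) := by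
  induction fs with
  | nil => intro c d c' d' _ _ _ _; simp [QI_nil]
  | cons f fs ih =>
    intro c d c' d' hc hd hc' hd'
    have hCpos : (0:ℝ) < C := lt_of_lt_of_le one_pos hC
    set m := fs.length with hm
    set K := C ^ m with hK
    have hKpos : 0 < K := by positivity
    have int1 : IntervalIntegrable (fun u => f u * QI fs u d) volume c c' :=
      QI_intInt hC h hd hc hc'
    have int2 : IntervalIntegrable (fun u => f u * QI fs u d) volume c' d' :=
      QI_intInt hC h hd hc' hd'
    have int3 : IntervalIntegrable (fun u => f u * QI fs u d) volume d' d :=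
      QI_intInt hC h hd hd' hd
    have int4 : IntervalIntegrable (fun u => f u * QI fs u d') volume c' d' :=
      QI_intInt hC h hd' hc' hd'
    have hsplit : (∫ u in c..d, f u * QI fs u d)
        = (∫ u in c..c', f u * QI fs u d) + (∫ u in c'..d', f u * QI fs u d)
          + (∫ u in d'..d, f u * QI fs u d) := by
      rw [intervalIntegral.integral_add_adjacent_intervals int1 int2,
        intervalIntegral.integral_add_adjacent_intervals (int1.trans int2) int3]
    have hdiff : (∫ u in c'..d', f u * QI fs u d) - (∫ u in c'..d', f u * QI fs u d')
        = ∫ u in c'..d', f u * QI fs u d - f u * QI fs u d' :=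
      (intervalIntegral.integral_sub int2 int4).symm
    have b1 : |∫ u in c..c', f u * QI fs u d| ≤ C * K * |c' - c| := by
      have := intervalIntegral.norm_integral_le_of_norm_le_const (C := C * K)
        (f := fun u => f u * QI fs u d) (a := c) (b := c') ?_
      · rwa [Real.norm_eq_abs] at this
      · intro x hx
        rw [Real.norm_eq_abs, abs_mul]
        exact mul_le_mul (h.head.2 x) (QI_bound hC h.tail (mem01_of_uIoc hc hc' hx) hd)
          (abs_nonneg _) hCpos.le
    have b2 : |∫ u in d'..d, f u * QI fs u d| ≤ C * K * |d - d'| := by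
      have := intervalIntegral.norm_integral_le_of_norm_le_const (C := C * K)
        (f := fun u => f u * QI fs u d) (a := d') (b := d) ?_
      · rwa [Real.norm_eq_abs] at this
      · intro x hx
        rw [Real.norm_eq_abs, abs_mul]
        exact mul_le_mul (h.head.2 x) (QI_bound hC h.tail (mem01_of_uIoc hd' hd hx) hd)
          (abs_nonneg _) hCpos.le
    have b3 : |∫ u in c'..d', f u * QI fs u d - f u * QI fs u d'|
        ≤ C * (m * K * |d - d'|) * |d' - c'| := by
      have := intervalIntegral.norm_integral_le_of_norm_le_const
        (C := C * (m * K * |d - d'|))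
        (f := fun u => f u * QI fs u d - f u * QI fs u d') (a := c') (b := d') ?_
      · rwa [Real.norm_eq_abs] at this
      · intro x hx
        have hx' := mem01_of_uIoc hc' hd' hx
        show ‖f x * QI fs x d - f x * QI fs x d'‖ ≤ _
        rw [Real.norm_eq_abs, ← mul_sub, abs_mul]
        refine mul_le_mul (h.head.2 x) ?_ (abs_nonneg _) hCpos.le
        have := ih h.tail hx' hd hx' hd'
        simpa using this
    have hd'c' : |d' - c'| ≤ 1 := by
      rw [abs_sub_le_iff]; constructor <;> linarith [hc'.1, hc'.2, hd'.1, hd'.2]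
    have expand : QI (f :: fs) c d - QI (f :: fs) c' d'
        = (∫ u in c..c', f u * QI fs u d) + (∫ u in d'..d, f u * QI fs u d)
          + ∫ u in c'..d', f u * QI fs u d - f u * QI fs u d' := by
      rw [QI_cons, QI_cons, hsplit, ← hdiff]; ring
    rw [expand]
    have habs : |(∫ u in c..c', f u * QI fs u d) + (∫ u in d'..d, f u * QI fs u d)
          + ∫ u in c'..d', f u * QI fs u d - f u * QI fs u d'|
        ≤ |∫ u in c..c', f u * QI fs u d| + |∫ u in d'..d, f u * QI fs u d|
          + |∫ u in c'..d', f u * QI fs u d - f u * QI fs u d'| :=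
      (abs_add_le _ _).trans (by gcongr; exact abs_add_le _ _)
    have hb3' : |∫ u in c'..d', f u * QI fs u d - f u * QI fs u d'|
        ≤ C * (m * K * |d - d'|) := by
      calc |∫ u in c'..d', f u * QI fs u d - f u * QI fs u d'|
          ≤ C * (m * K * |d - d'|) * |d' - c'| := b3
        _ ≤ C * (m * K * |d - d'|) * 1 := by
            apply mul_le_mul_of_nonneg_left hd'c' (by positivity)
        _ = C * (m * K * |d - d'|) := by ring
    have hlen : ((f :: fs).length : ℝ) = (m : ℝ) + 1 := by
      simp [hm]
    have hKlen : C ^ (f :: fs).length = C * K := by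
      simp [hK, hm, pow_succ, mul_comm]
    rw [List.length_cons] at *
    have habc : |c - c'| = |c' - c| := abs_sub_comm _ _
    calc _ ≤ _ := habs
      _ ≤ C * K * |c' - c| + C * K * |d - d'| + C * (m * K * |d - d'|) := by
          gcongr
      _ ≤ (↑(fs.length + 1) : ℝ) * C ^ (fs.length + 1) * (|c - c'| + |d - d'|) := by
          rw [habc.symm]
          push_cast
          have h1 : (0:ℝ) ≤ |c - c'| := abs_nonneg _
          have h2 : (0:ℝ) ≤ |d - d'| := abs_nonneg _
          have h3 : (0:ℝ) ≤ (m:ℝ) := Nat.cast_nonneg _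
          rw [pow_succ, show C ^ fs.length = K from rfl, show m = fs.length from rfl]
          nlinarith [mul_nonneg (mul_nonneg (Nat.cast_nonneg fs.length)
              (mul_nonneg hKpos.le hCpos.le)) h1,
            mul_nonneg (mul_nonneg hKpos.le hCpos.le) h1,
            mul_nonneg (mul_nonneg hKpos.le hCpos.le) h2]
lemma Ok.append_left {C : ℝ} {fs gs : List (ℝ → ℝ)} (h : Ok C (fs ++ gs)) : Ok C fs :=
  fun g hg => h g (List.mem_append_left _ hg)
lemma Ok.append_right {C : ℝ} {fs gs : List (ℝ → ℝ)} (h : Ok C (fs ++ gs)) : Ok C gs :=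
  fun g hg => h g (List.mem_append_right _ hg)

lemma QI_contOn {C : ℝ} (hC : 1 ≤ C) {fs : List (ℝ → ℝ)} (h : Ok C fs) :
    ContinuousOn (fun p : ℝ × ℝ => QI fs p.1 p.2) (Icc 0 1 ×ˢ Icc 0 1) := by
  set L : ℝ := fs.length * C ^ fs.length with hL
  have hL0 : 0 ≤ L := by positivity
  apply LipschitzOnWith.continuousOn (K := Real.toNNReal (2 * L))
  apply LipschitzOnWith.of_dist_le_mul
  intro p hp q hq
  rw [Set.mem_prod] at hp hq
  rw [Real.dist_eq]
  calc |QI fs p.1 p.2 - QI fs q.1 q.2| ≤ L * (|p.1 - q.1| + |p.2 - q.2|) :=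
        QI_lip hC h hp.1 hp.2 hq.1 hq.2
    _ ≤ L * (dist p q + dist p q) := by
        gcongr
        · rw [← Real.dist_eq]; exact (le_max_left _ _).trans_eq (Prod.dist_eq (x := p)).symm
        · rw [← Real.dist_eq]; exact (le_max_right _ _).trans_eq (Prod.dist_eq (x := p)).symm
    _ = ↑(Real.toNNReal (2 * L)) * dist p q := by
        rw [Real.coe_toNNReal _ (by positivity)]; ring

lemma QI_contOn_right {C : ℝ} (hC : 1 ≤ C) {fs : List (ℝ → ℝ)} (h : Ok C fs)
    {c : ℝ} (hc : c ∈ Icc (0:ℝ) 1) :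
    ContinuousOn (fun b => QI fs c b) (Icc 0 1) := by
  have := (QI_contOn hC h).comp ((continuous_const.prodMk continuous_id).continuousOn
    (s := Icc (0:ℝ) 1)) (fun b hb => Set.mk_mem_prod hc hb)
  exact this

lemma QI_contOn_left {C : ℝ} (hC : 1 ≤ C) {fs : List (ℝ → ℝ)} (h : Ok C fs)
    {d : ℝ} (hd : d ∈ Icc (0:ℝ) 1) :
    ContinuousOn (fun a => QI fs a d) (Icc 0 1) := by
  have := (QI_contOn hC h).comp ((continuous_id.prodMk continuous_const).continuousOn
    (s := Icc (0:ℝ) 1)) (fun b hb => Set.mk_mem_prod hb hd)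
  exact this

lemma int_of_bounded_support {α : Type*} [MeasurableSpace α] {μ : Measure α} {F : α → ℝ}
    {s : Set α} (hs : MeasurableSet s) (hμ : μ s ≠ ⊤) (hF : Measurable F)
    (h0 : ∀ x ∉ s, F x = 0) {M : ℝ} (hb : ∀ x, |F x| ≤ M) : Integrable F μ := by
  have hint : Integrable (s.indicator fun _ => M) μ := by
    rw [integrable_indicator_iff hs]
    exact integrableOn_const hμ
  apply Integrable.mono' hint hF.aestronglyMeasurable
  apply ae_of_all
  intro x
  rw [Real.norm_eq_abs]
  by_cases hx : x ∈ s
  · rw [Set.indicator_of_mem hx]; exact hb x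
  · rw [Set.indicator_of_notMem hx, h0 x hx]; simp

lemma tri_swap {Φ : ℝ → ℝ → ℝ} (hΦ : Measurable fun p : ℝ × ℝ => Φ p.1 p.2)
    {M : ℝ} (hb : ∀ v u, v ∈ Icc (0:ℝ) 1 → u ∈ Icc (0:ℝ) 1 → |Φ v u| ≤ M)
    {c d : ℝ} (hc : 0 ≤ c) (hcd : c ≤ d) (hd : d ≤ 1) :
    ∫ v in c..d, (∫ u in v..d, Φ v u) = ∫ u in c..d, (∫ v in c..u, Φ v u) := by
  set T : Set (ℝ × ℝ) := {p | c < p.1 ∧ p.1 < p.2 ∧ p.2 ≤ d} with hT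
  have hTm : MeasurableSet T := by
    apply MeasurableSet.inter (measurableSet_lt measurable_const measurable_fst)
    exact (measurableSet_lt measurable_fst measurable_snd).inter
      (measurableSet_le measurable_snd measurable_const)
  set F : ℝ × ℝ → ℝ := T.indicator (fun p => Φ p.1 p.2) with hF
  have hmem01 : ∀ p ∈ T, p.1 ∈ Icc (0:ℝ) 1 ∧ p.2 ∈ Icc (0:ℝ) 1 := by
    rintro p ⟨h1, h2, h3⟩
    exact ⟨⟨by linarith, by linarith⟩, ⟨by linarith, by linarith⟩⟩
  have hFint : Integrable F (volume.prod volume) := by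
    apply int_of_bounded_support (s := Set.Ioc c d ×ˢ Set.Ioc c d) (M := max M 0)
      (measurableSet_Ioc.prod measurableSet_Ioc)
    · rw [Measure.prod_prod]
      exact ENNReal.mul_ne_top measure_Ioc_lt_top.ne measure_Ioc_lt_top.ne
    · exact hΦ.indicator hTm
    · intro p hp
      apply Set.indicator_of_notMem
      rintro ⟨h1, h2, h3⟩
      exact hp ⟨⟨h1, by linarith⟩, ⟨by linarith, h3⟩⟩
    · intro p
      rw [hF]
      by_cases hp : p ∈ T
      · rw [Set.indicator_of_mem hp]
        exact le_max_of_le_left (hb _ _ (hmem01 p hp).1 (hmem01 p hp).2)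
      · rw [Set.indicator_of_notMem hp]; simp
  have swap := MeasureTheory.integral_integral_swap (μ := volume) (ν := volume)
    (f := fun v u => F (v, u)) (by exact hFint)
  have lhs_eq : (∫ v, ∫ u, F (v, u)) = ∫ v in c..d, (∫ u in v..d, Φ v u) := by
    have hpt : (fun v => ∫ u, F (v, u))
        = (Set.Ioc c d).indicator (fun v => ∫ u in v..d, Φ v u) := by
      funext v
      by_cases hv : v ∈ Set.Ioc c d
      · rw [Set.indicator_of_mem hv]
        have : (fun u => F (v, u)) = (Set.Ioc v d).indicator (fun u => Φ v u) := by
          funext u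
          by_cases hu : u ∈ Set.Ioc v d
          · rw [Set.indicator_of_mem hu, hF, Set.indicator_of_mem]
            exact ⟨hv.1, hu.1, hu.2⟩
          · rw [Set.indicator_of_notMem hu, hF, Set.indicator_of_notMem]
            rintro ⟨h1, h2, h3⟩
            exact hu ⟨h2, h3⟩
        rw [this, MeasureTheory.integral_indicator measurableSet_Ioc,
          intervalIntegral.integral_of_le hv.2]
      · have : (fun u => F (v, u)) = fun _ => 0 := by
          funext u
          rw [hF, Set.indicator_of_notMem]
          rintro ⟨h1, h2, h3⟩
          rw [Set.mem_Ioc, not_and_or] at hv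
          rcases hv with h | h
          · exact h h1
          · push_neg at h; linarith
        rw [Set.indicator_of_notMem hv, this, MeasureTheory.integral_zero]
    rw [hpt, MeasureTheory.integral_indicator measurableSet_Ioc,
      intervalIntegral.integral_of_le hcd]
  have rhs_eq : (∫ u, ∫ v, F (v, u)) = ∫ u in c..d, (∫ v in c..u, Φ v u) := by
    have hpt : (fun u => ∫ v, F (v, u))
        = (Set.Ioc c d).indicator (fun u => ∫ v in c..u, Φ v u) := by
      funext u
      by_cases hu : u ∈ Set.Ioc c d
      · rw [Set.indicator_of_mem hu]
        have : (fun v => F (v, u)) = (Set.Ioo c u).indicator (fun v => Φ v u) := by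
          funext v
          by_cases hv : v ∈ Set.Ioo c u
          · rw [Set.indicator_of_mem hv, hF, Set.indicator_of_mem]
            exact ⟨hv.1, hv.2, hu.2⟩
          · rw [Set.indicator_of_notMem hv, hF, Set.indicator_of_notMem]
            rintro ⟨h1, h2, h3⟩
            exact hv ⟨h1, h2⟩
        rw [this, MeasureTheory.integral_indicator measurableSet_Ioo,
          ← MeasureTheory.integral_Ioc_eq_integral_Ioo,
          intervalIntegral.integral_of_le hu.1.le]
      · have : (fun v => F (v, u)) = fun _ => 0 := by
          funext v
          rw [hF, Set.indicator_of_notMem]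
          rintro ⟨h1, h2, h3⟩
          rw [Set.mem_Ioc, not_and_or] at hu
          rcases hu with h | h
          · push_neg at h; linarith
          · exact h h3
        rw [Set.indicator_of_notMem hu, this, MeasureTheory.integral_zero]
    rw [hpt, MeasureTheory.integral_indicator measurableSet_Ioc,
      intervalIntegral.integral_of_le hcd]
  rw [← lhs_eq, ← rhs_eq, swap]

lemma Ok.cons {C : ℝ} {f : ℝ → ℝ} {fs : List (ℝ → ℝ)}
    (hf : Measurable f ∧ ∀ x, |f x| ≤ C) (h : Ok C fs) : Ok C (f :: fs) := by
  intro g hg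
  rcases List.mem_cons.mp hg with rfl | hg
  · exact hf
  · exact h g hg

lemma QI_mid {C : ℝ} (hC : 1 ≤ C) {f : ℝ → ℝ} (hf : Measurable f ∧ ∀ x, |f x| ≤ C)
    {gs : List (ℝ → ℝ)} (hgs : Ok C gs) :
    ∀ (fs : List (ℝ → ℝ)), Ok C fs → ∀ {c d : ℝ}, 0 ≤ c → c ≤ d → d ≤ 1 →
    QI (fs ++ f :: gs) c d = ∫ a in c..d, f a * QI fs c a * QI gs a d := by
  intro fs
  induction fs with
  | nil =>
    intro _ c d hc hcd hd
    rw [List.nil_append, QI_cons]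
    apply intervalIntegral.integral_congr
    intro a _
    simp
  | cons f1 fs' ih =>
    intro hfs c d hc hcd hd
    have hCpos : (0:ℝ) < C := lt_of_lt_of_le one_pos hC
    rw [List.cons_append, QI_cons]
    set Φ : ℝ → ℝ → ℝ := fun v u => f1 v * (f u * QI fs' v u * QI gs u d) with hΦdef
    have step1 : (∫ u in c..d, f1 u * QI (fs' ++ f :: gs) u d)
        = ∫ v in c..d, (∫ u in v..d, Φ v u) := by
      apply intervalIntegral.integral_congr
      intro v hv
      rw [Set.uIcc_of_le hcd] at hv
      show f1 v * QI (fs' ++ f :: gs) v d = ∫ u in v..d, Φ v u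
      rw [ih hfs.tail (by linarith [hv.1]) hv.2 hd]
      rw [← intervalIntegral.integral_const_mul]
    have hΦm : Measurable fun p : ℝ × ℝ => Φ p.1 p.2 := by
      apply (hfs.head.1.comp measurable_fst).mul
      apply Measurable.mul
      apply Measurable.mul (hf.1.comp measurable_snd)
      · exact QI_measurable hfs.tail
      · exact (QI_measurable hgs).comp (measurable_snd.prodMk measurable_const)
    have hd01 : d ∈ Icc (0:ℝ) 1 := ⟨by linarith, hd⟩
    have hΦb : ∀ v u, v ∈ Icc (0:ℝ) 1 → u ∈ Icc (0:ℝ) 1 →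
        |Φ v u| ≤ C * (C * C ^ fs'.length * C ^ gs.length) := by
      intro v u hv hu
      have e1 : |f1 v| ≤ C := hfs.head.2 v
      have e2 : |f u| ≤ C := hf.2 u
      have e3 : |QI fs' v u| ≤ C ^ fs'.length := QI_bound hC hfs.tail hv hu
      have e4 : |QI gs u d| ≤ C ^ gs.length := QI_bound hC hgs hu hd01
      have r1 : |f u| * |QI fs' v u| ≤ C * C ^ fs'.length :=
        mul_le_mul e2 e3 (abs_nonneg _) hCpos.le
      have r2 : |f u| * |QI fs' v u| * |QI gs u d| ≤ C * C ^ fs'.length * C ^ gs.length :=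
        mul_le_mul r1 e4 (abs_nonneg _) (by positivity)
      calc |Φ v u| = |f1 v| * (|f u| * |QI fs' v u| * |QI gs u d|) := by
            rw [hΦdef]; simp only; rw [abs_mul, abs_mul, abs_mul]
        _ ≤ C * (C * C ^ fs'.length * C ^ gs.length) :=
            mul_le_mul e1 r2 (by positivity) hCpos.le
    have step2 := tri_swap hΦm hΦb hc hcd hd
    rw [step1, step2]
    apply intervalIntegral.integral_congr
    intro a ha
    rw [Set.uIcc_of_le hcd] at ha
    show (∫ v in c..a, Φ v a) = f a * QI (f1 :: fs') c a * QI gs a d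
    have : (∫ v in c..a, Φ v a)
        = (f a * QI gs a d) * ∫ v in c..a, f1 v * QI fs' v a := by
      rw [← intervalIntegral.integral_const_mul]
      apply intervalIntegral.integral_congr
      intro v _
      simp only [hΦdef]
      ring
    rw [this, QI_cons]
    ring
def oS (m : ℕ) (c d : ℝ) : Set (Fin m → ℝ) :=
  {s | StrictMono s ∧ ∀ i, s i ∈ Ioo c d}

lemma oS_meas {m : ℕ} {c d : ℝ} : MeasurableSet (oS m c d) := by
  have : oS m c d = {s : Fin m → ℝ | ∀ p : Fin m × Fin m, p.1 < p.2 → s p.1 < s p.2}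
      ∩ ⋂ i, {s | c < s i ∧ s i < d} := by
    ext s
    simp only [oS, Set.mem_inter_iff, Set.mem_setOf_eq, Set.mem_iInter, Set.mem_Ioo]
    constructor
    · rintro ⟨h1, h2⟩; exact ⟨fun p hp => h1 hp, fun i => h2 i⟩
    · rintro ⟨h1, h2⟩; exact ⟨fun i j hij => h1 (i, j) hij, h2⟩
  rw [this]
  apply MeasurableSet.inter
  · have : {s : Fin m → ℝ | ∀ p : Fin m × Fin m, p.1 < p.2 → s p.1 < s p.2}
        = ⋂ p : Fin m × Fin m, {s | p.1 < p.2 → s p.1 < s p.2} := by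
      ext s; simp
    rw [this]
    apply MeasurableSet.iInter
    intro p
    by_cases hp : p.1 < p.2
    · simp only [hp, forall_true_left]
      exact measurableSet_lt (measurable_pi_apply _) (measurable_pi_apply _)
    · simp only [hp, false_implies]; exact MeasurableSet.univ
  · exact MeasurableSet.iInter fun i =>
      (measurableSet_lt measurable_const (measurable_pi_apply _)).inter
        (measurableSet_lt (measurable_pi_apply _) measurable_const)

lemma master {C : ℝ} (hC : 1 ≤ C) :
    ∀ (m : ℕ) (F : Fin m → ℝ → ℝ), (∀ i, Measurable (F i) ∧ ∀ x, |F i x| ≤ C) →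
    ∀ {c d : ℝ}, 0 ≤ c → c ≤ d → d ≤ 1 →
    (∫ s in oS m c d, ∏ i, F i (s i)) = QI (List.ofFn F) c d := by
  intro m
  induction m with
  | zero =>
    intro F _ c d _ _ _
    have h1 : oS 0 c d = Set.univ := by
      ext s
      simp [oS, Subsingleton.strictMono s]
    rw [h1, List.ofFn_zero, QI_nil, Measure.restrict_univ]
    have : ∀ s : Fin 0 → ℝ, (∏ i, F i (s i)) = 1 := by intro s; simp
    rw [integral_congr_ae (ae_of_all _ this), MeasureTheory.integral_const, smul_eq_mul, mul_one]
    have : (volume : Measure (Fin 0 → ℝ)) Set.univ = 1 := by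
      rw [MeasureTheory.volume_pi, Measure.pi_univ]
      simp
    rw [measureReal_def, this]; simp
  | succ m ih =>
    intro F hF c d hc hcd hd
    set e := MeasurableEquiv.piFinSuccAbove (fun _ : Fin (m + 1) => ℝ) 0 with he
    have hmp : MeasurePreserving e volume (volume.prod volume) := by
      have := MeasureTheory.measurePreserving_piFinSuccAbove (fun _ : Fin (m+1) => (volume : Measure ℝ)) 0
      exact this
    set G : (Fin (m + 1) → ℝ) → ℝ :=
      (oS (m + 1) c d).indicator (fun s => ∏ i, F i (s i)) with hG
    set ins : ℝ → (Fin m → ℝ) → (Fin (m+1) → ℝ) :=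
      fun u y => Fin.insertNth (α := fun _ : Fin (m+1) => ℝ) 0 u y with hins
    have hsymm : ∀ p : ℝ × (Fin m → ℝ), e.symm p = ins p.1 p.2 := by
      intro p; rfl
    have happ0 : ∀ (u : ℝ) (y : Fin m → ℝ), (ins u y) 0 = u := by
      intro u y
      rw [hins]
      exact Fin.insertNth_apply_same (α := fun _ : Fin (m+1) => ℝ) 0 u y
    have happs : ∀ (u : ℝ) (y : Fin m → ℝ) (j : Fin m),
        (ins u y) j.succ = y j := by
      intro u y j
      rw [hins, ← Fin.zero_succAbove j]
      exact Fin.insertNth_apply_succAbove (α := fun _ : Fin (m+1) => ℝ) 0 u y j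
    have hmem : ∀ (u : ℝ) (y : Fin m → ℝ),
        (ins u y) ∈ oS (m+1) c d ↔ (u ∈ Ioo c d ∧ y ∈ oS m u d) := by
      intro u y
      constructor
      · rintro ⟨hmono, hbd⟩
        refine ⟨by simpa [happ0] using hbd 0, ⟨?_, ?_⟩⟩
        · intro a b hab
          have := hmono (Fin.succ_lt_succ_iff.mpr hab)
          rwa [happs, happs] at this
        · intro j
          constructor
          · have := hmono (Fin.succ_pos j)
            rwa [happ0, happs] at this
          · simpa [happs] using (hbd j.succ).2
      · rintro ⟨hu, hy⟩
        constructor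
        · intro i j hij
          induction j using Fin.cases with
          | zero => exact (Fin.not_lt_zero _ hij).elim
          | succ b =>
            induction i using Fin.cases with
            | zero =>
              rw [happ0, happs]
              exact (hy.2 b).1
            | succ a =>
              rw [happs, happs]
              exact hy.1 (Fin.succ_lt_succ_iff.mp hij)
        · intro i
          induction i using Fin.cases with
          | zero => rw [happ0]; exact hu
          | succ a =>
            rw [happs]
            exact ⟨lt_trans hu.1 (hy.2 a).1, (hy.2 a).2⟩
    have hprod : ∀ (u : ℝ) (y : Fin m → ℝ),
        (∏ i, F i ((ins u y) i))
          = F 0 u * ∏ j, F j.succ (y j) := by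
      intro u y
      rw [Fin.prod_univ_succ, happ0]
      simp only [happs]
    -- integrability of G
    have hGmeas : Measurable G := by
      apply Measurable.indicator _ oS_meas
      exact Finset.measurable_prod Finset.univ fun i _ =>
        (hF i).1.comp (measurable_pi_apply i)
    have hGbd : ∀ s, |G s| ≤ C ^ (m + 1) := by
      intro s
      rw [hG]
      by_cases hs : s ∈ oS (m+1) c d
      · rw [Set.indicator_of_mem hs]
        calc |∏ i, F i (s i)| = ∏ i, |F i (s i)| := Finset.abs_prod _ _
          _ ≤ ∏ _i : Fin (m+1), C := Finset.prod_le_prod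
              (fun i _ => abs_nonneg _) (fun i _ => (hF i).2 _)
          _ = C ^ (m + 1) := by rw [Finset.prod_const]; simp
      · rw [Set.indicator_of_notMem hs]
        have : (0:ℝ) ≤ C ^ (m+1) := by positivity
        simpa using this
    have hGsupp : ∀ s ∉ Set.pi Set.univ (fun _ : Fin (m+1) => Ioo c d), G s = 0 := by
      intro s hs
      apply Set.indicator_of_notMem
      intro hmem'
      exact hs fun i _ => hmem'.2 i
    have hGint : Integrable G volume := by
      apply int_of_bounded_support (MeasurableSet.univ_pi fun _ => measurableSet_Ioo)
        _ hGmeas hGsupp hGbd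
      rw [MeasureTheory.volume_pi, Measure.pi_pi]
      exact ENNReal.prod_ne_top fun i _ => measure_Ioo_lt_top.ne
    -- change of variables
    have step1 : (∫ s in oS (m+1) c d, ∏ i, F i (s i)) = ∫ s, G s := by
      rw [hG, MeasureTheory.integral_indicator oS_meas]
    have hGint' : Integrable (fun p : ℝ × (Fin m → ℝ) => G (e.symm p)) (volume.prod volume) := by
      have : MeasurePreserving e.symm (volume.prod volume) volume := hmp.symm e
      exact (this.integrable_comp_emb (MeasurableEquiv.measurableEmbedding _)).mpr hGint
    have step2 : (∫ s, G s) = ∫ p : ℝ × (Fin m → ℝ), G (e.symm p) ∂(volume.prod volume) := by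
      have := (hmp.symm e).integral_comp (MeasurableEquiv.measurableEmbedding e.symm) G
      exact this.symm
    have step3 : (∫ p : ℝ × (Fin m → ℝ), G (e.symm p) ∂(volume.prod volume))
        = ∫ u : ℝ, ∫ y : Fin m → ℝ, G (e.symm (u, y)) := by
      exact MeasureTheory.integral_prod _ hGint'
    -- inner integral
    have hinner : ∀ u : ℝ, (∫ y : Fin m → ℝ, G (e.symm (u, y)))
        = (Set.Ioo c d).indicator (fun u => F 0 u * QI (List.ofFn fun j => F j.succ) u d) u := by
      intro u
      by_cases hu : u ∈ Set.Ioo c d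
      · have : (fun y : Fin m → ℝ => G (e.symm (u, y)))
            = (oS m u d).indicator (fun y => F 0 u * ∏ j, F j.succ (y j)) := by
          funext y
          rw [hsymm, hG]
          by_cases hy : y ∈ oS m u d
          · rw [Set.indicator_of_mem ((hmem u y).mpr ⟨hu, hy⟩), Set.indicator_of_mem hy,
              hprod]
          · rw [Set.indicator_of_notMem, Set.indicator_of_notMem hy]
            intro hmem'
            exact hy ((hmem u y).mp hmem').2
        rw [this, MeasureTheory.integral_indicator oS_meas,
          MeasureTheory.integral_const_mul,
          ih (fun j => F j.succ) (fun j => hF j.succ) (le_trans hc hu.1.le) hu.2.le hd,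
          Set.indicator_of_mem hu]
      · have hz : (fun y : Fin m → ℝ => G (e.symm (u, y))) = fun _ => 0 := by
          funext y
          rw [hsymm, hG]
          apply Set.indicator_of_notMem
          intro hmem'
          exact hu ((hmem u y).mp hmem').1
        rw [hz, MeasureTheory.integral_zero, Set.indicator_of_notMem hu]
    calc (∫ s in oS (m+1) c d, ∏ i, F i (s i))
        = ∫ u : ℝ, ∫ y : Fin m → ℝ, G (e.symm (u, y)) := by rw [step1, step2, step3]
      _ = ∫ u : ℝ, (Set.Ioo c d).indicator
            (fun u => F 0 u * QI (List.ofFn fun j => F j.succ) u d) u :=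
          integral_congr_ae (ae_of_all _ hinner)
      _ = ∫ u in Set.Ioo c d, F 0 u * QI (List.ofFn fun j => F j.succ) u d :=
          MeasureTheory.integral_indicator measurableSet_Ioo
      _ = ∫ u in Set.Ioc c d, F 0 u * QI (List.ofFn fun j => F j.succ) u d :=
          (MeasureTheory.integral_Ioc_eq_integral_Ioo).symm
      _ = ∫ u in c..d, F 0 u * QI (List.ofFn fun j => F j.succ) u d :=
          (intervalIntegral.integral_of_le hcd).symm
      _ = QI (List.ofFn F) c d := by rw [List.ofFn_succ, QI_cons]


lemma clamp_cont : Continuous (fun u : ℝ => max 0 (min 1 u)) :=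
  continuous_const.max (continuous_const.min continuous_id)

lemma clamp_mem (u : ℝ) : max 0 (min 1 u) ∈ Icc (0:ℝ) 1 := by
  constructor
  · exact le_max_left _ _
  · apply max_le zero_le_one (min_le_left _ _)

lemma clamp_eq {u : ℝ} (hu : u ∈ Icc (0:ℝ) 1) : max 0 (min 1 u) = u := by
  rw [min_eq_right hu.2, max_eq_right hu.1]

lemma orderedSimplex_meas {n : ℕ} : MeasurableSet (orderedSimplex n) := by
  have : orderedSimplex n
      = {s : Fin n → ℝ | ∀ p : Fin n × Fin n, p.1 < p.2 → s p.1 < s p.2}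
        ∩ ⋂ i, {s | 0 ≤ s i ∧ s i ≤ 1} := by
    ext s
    simp only [orderedSimplex, Set.mem_inter_iff, Set.mem_setOf_eq, Set.mem_iInter,
      Set.mem_Icc]
    constructor
    · rintro ⟨h2, h1⟩; exact ⟨fun p hp => h1 hp, fun i => h2 i⟩
    · rintro ⟨h1, h2⟩; exact ⟨fun i => h2 i, fun i j hij => h1 (i, j) hij⟩
  rw [this]
  apply MeasurableSet.inter
  · have : {s : Fin n → ℝ | ∀ p : Fin n × Fin n, p.1 < p.2 → s p.1 < s p.2}
        = ⋂ p : Fin n × Fin n, {s | p.1 < p.2 → s p.1 < s p.2} := by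
      ext s; simp
    rw [this]
    apply MeasurableSet.iInter
    intro p
    by_cases hp : p.1 < p.2
    · simp only [hp, forall_true_left]
      exact measurableSet_lt (measurable_pi_apply _) (measurable_pi_apply _)
    · simp only [hp, false_implies]; exact MeasurableSet.univ
  · exact MeasurableSet.iInter fun i =>
      (measurableSet_le measurable_const (measurable_pi_apply _)).inter
        (measurableSet_le (measurable_pi_apply _) measurable_const)

lemma oS_open {n : ℕ} : IsOpen (oS n 0 1) := by
  have : oS n 0 1
      = (⋂ p : Fin n × Fin n, {s : Fin n → ℝ | p.1 < p.2 → s p.1 < s p.2})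
        ∩ ⋂ i, {s | 0 < s i ∧ s i < 1} := by
    ext s
    simp only [oS, Set.mem_inter_iff, Set.mem_setOf_eq, Set.mem_iInter, Set.mem_Ioo]
    constructor
    · rintro ⟨h1, h2⟩; exact ⟨fun p hp => h1 hp, fun i => h2 i⟩
    · rintro ⟨h1, h2⟩; exact ⟨fun i j hij => h1 (i, j) hij, h2⟩
  rw [this]
  apply IsOpen.inter
  · apply isOpen_iInter_of_finite
    intro p
    by_cases hp : p.1 < p.2
    · simp only [hp, forall_true_left]
      exact isOpen_lt (continuous_apply _) (continuous_apply _)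
    · simp only [hp, false_implies]; exact isOpen_univ
  · apply isOpen_iInter_of_finite
    intro i
    exact (isOpen_lt continuous_const (continuous_apply _)).inter
      (isOpen_lt (continuous_apply _) continuous_const)

lemma oS_nonempty {n : ℕ} : (oS n 0 1).Nonempty := by
  refine ⟨fun i => ((i:ℝ) + 1) / ((n:ℝ) + 1), ?_, ?_⟩
  · intro i j hij
    have h1 : (i:ℝ) < (j:ℝ) := by exact_mod_cast hij
    have h2 : (0:ℝ) < (n:ℝ) + 1 := by positivity
    exact (div_lt_div_iff_of_pos_right h2).mpr (by linarith)
  · intro i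
    constructor
    · positivity
    · rw [div_lt_one (by positivity)]
      have : (i:ℝ) < n := by exact_mod_cast i.isLt
      linarith

lemma simplex_ae (n : ℕ) : (orderedSimplex n : Set (Fin n → ℝ)) =ᵐ[volume] oS n 0 1 := by
  have hsub : oS n 0 1 ⊆ orderedSimplex n := fun s hs =>
    ⟨fun j => ⟨(hs.2 j).1.le, (hs.2 j).2.le⟩, hs.1⟩
  have hdiff : orderedSimplex n \ oS n 0 1
      ⊆ ⋃ i, ({s : Fin n → ℝ | s i = 0} ∪ {s | s i = 1}) := by
    rintro s ⟨⟨hb, hm⟩, hns⟩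
    by_contra hcon
    simp only [Set.mem_iUnion, Set.mem_union, Set.mem_setOf_eq, not_exists, not_or] at hcon
    exact hns ⟨hm, fun i => ⟨lt_of_le_of_ne (hb i).1 (Ne.symm (hcon i).1),
      lt_of_le_of_ne (hb i).2 (hcon i).2⟩⟩
  have hnull : volume (orderedSimplex n \ oS n 0 1) = 0 := by
    apply measure_mono_null hdiff
    apply measure_iUnion_null
    intro i
    apply measure_union_null
    · rw [MeasureTheory.volume_pi]
      exact Measure.pi_hyperplane _ i 0
    · rw [MeasureTheory.volume_pi]
      exact Measure.pi_hyperplane _ i 1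
  rw [Filter.eventuallyEq_set]
  have := measure_eq_zero_iff_ae_notMem.mp hnull
  filter_upwards [this] with s hs
  constructor
  · intro h
    by_contra h2
    exact hs ⟨h, h2⟩
  · exact fun h => hsub h

lemma key_lemma {n : ℕ} {C : ℝ} (hC : 1 ≤ C) (gE : Fin n → ℝ → ℝ)
    (hmeas : ∀ j, Measurable (gE j)) (hbd : ∀ j u, |gE j u| ≤ C)
    (j : Fin n) {τ : ℝ} (hτ : τ ∈ Icc (0:ℝ) 1) :
    (∫ s in oS n 0 1, (if s j ≤ τ then (1:ℝ) else 0) * ∏ i, gE i (s i))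
      = ∫ a in (0:ℝ)..τ, gE j a * QI ((List.ofFn gE).take (j:ℕ)) 0 a
          * QI ((List.ofFn gE).drop ((j:ℕ)+1)) a 1 := by
  have hCpos : (0:ℝ) < C := lt_of_lt_of_le one_pos hC
  set gl : List (ℝ → ℝ) := List.ofFn gE with hgl
  have okgl : Ok C gl := by
    intro f hf
    rw [hgl, List.mem_ofFn] at hf
    rcases hf with ⟨i, rfl⟩
    exact ⟨hmeas i, hbd i⟩
  have oktake : Ok C (gl.take (j:ℕ)) := fun f hf => okgl f (List.mem_of_mem_take hf)
  have okdrop : Ok C (gl.drop ((j:ℕ)+1)) := fun f hf => okgl f (List.mem_of_mem_drop hf)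
  set cap : ℝ → ℝ := fun u => if u ≤ τ then gE j u else 0 with hcap
  have hcapok : Measurable cap ∧ ∀ x, |cap x| ≤ C := by
    constructor
    · exact Measurable.ite (measurableSet_le measurable_id measurable_const)
        (hmeas j) measurable_const
    · intro x
      rw [hcap]
      by_cases hx : x ≤ τ
      · simpa [hx] using hbd j x
      · simp [hx]
        linarith
  set Fc : Fin n → ℝ → ℝ := fun i => if i = j then cap else gE i with hFc
  have hFcok : ∀ i, Measurable (Fc i) ∧ ∀ x, |Fc i x| ≤ C := by
    intro i
    by_cases hi : i = j
    · simpa [hFc, hi] using hcapok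
    · simpa [hFc, hi] using ⟨hmeas i, hbd i⟩
  -- step A : pointwise integrand equality
  have stepA : ∀ s : Fin n → ℝ,
      (if s j ≤ τ then (1:ℝ) else 0) * ∏ i, gE i (s i) = ∏ i, Fc i (s i) := by
    intro s
    have hfac : ∀ i, Fc i (s i)
        = (if i = j then (if s j ≤ τ then (1:ℝ) else 0) else 1) * gE i (s i) := by
      intro i
      by_cases hi : i = j
      · subst hi
        by_cases hs : s i ≤ τ <;> simp [hFc, hcap, hs]
      · simp [hFc, hi]
    rw [Finset.prod_congr rfl (fun i _ => hfac i), Finset.prod_mul_distrib,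
      Finset.prod_ite_eq' Finset.univ j
        (fun _ => if s j ≤ τ then (1:ℝ) else 0)]
    simp
  have stepA' : (∫ s in oS n 0 1, (if s j ≤ τ then (1:ℝ) else 0) * ∏ i, gE i (s i))
      = ∫ s in oS n 0 1, ∏ i, Fc i (s i) :=
    integral_congr_ae (ae_of_all _ fun s => stepA s)
  -- step B : master
  have stepB : (∫ s in oS n 0 1, ∏ i, Fc i (s i)) = QI (List.ofFn Fc) 0 1 :=
    master hC n Fc hFcok le_rfl zero_le_one le_rfl
  -- step C : list surgery
  have stepC : List.ofFn Fc = gl.take (j:ℕ) ++ cap :: gl.drop ((j:ℕ)+1) := by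
    have h1 : List.ofFn Fc = gl.set (j:ℕ) cap := by
      apply List.ext_getElem
      · simp [hgl]
      · intro i h1 h2
        rw [List.getElem_ofFn, List.getElem_set]
        by_cases hi : (j:ℕ) = i
        · have hfin : (⟨i, by simpa [List.length_ofFn] using h1⟩ : Fin n) = j := by
            apply Fin.ext; simp [hi.symm]
          rw [if_pos hi]
          simp only [hFc, if_pos hfin]
        · have hfin : (⟨i, by simpa [List.length_ofFn] using h1⟩ : Fin n) ≠ j := by
            intro hcon
            apply hi
            rw [← hcon]
          rw [if_neg hi]
          simp only [hFc, if_neg hfin]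
          exact (List.getElem_ofFn (f := gE) (i := i) (by simpa [hgl] using h2)).symm
    rw [h1, List.set_eq_take_append_cons_drop, if_pos]
    rw [hgl, List.length_ofFn]
    exact j.isLt
  -- step D : middle extraction
  have stepD : QI (gl.take (j:ℕ) ++ cap :: gl.drop ((j:ℕ)+1)) 0 1
      = ∫ a in (0:ℝ)..1, cap a * QI (gl.take (j:ℕ)) 0 a * QI (gl.drop ((j:ℕ)+1)) a 1 :=
    QI_mid hC hcapok okdrop _ oktake le_rfl zero_le_one le_rfl
  -- step E : trimming the cap
  set W : ℝ → ℝ := fun a => cap a * QI (gl.take (j:ℕ)) 0 a * QI (gl.drop ((j:ℕ)+1)) a 1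
    with hW
  have hWmeas : Measurable W := by
    apply Measurable.mul
    apply Measurable.mul hcapok.1
    · exact (QI_measurable oktake).comp (measurable_const.prodMk measurable_id)
    · exact (QI_measurable okdrop).comp (measurable_id.prodMk measurable_const)
  have hWbd : ∀ {a b : ℝ}, a ∈ Icc (0:ℝ) 1 → b ∈ Icc (0:ℝ) 1 →
      ∀ x ∈ Ι a b, |W x| ≤ C * C ^ (gl.take (j:ℕ)).length * C ^ (gl.drop ((j:ℕ)+1)).length := by
    intro a b ha hb x hx
    have hx' := mem01_of_uIoc ha hb hx
    rw [hW]
    simp only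
    rw [abs_mul, abs_mul]
    have h1 := hcapok.2 x
    have h2 := QI_bound hC oktake (c := 0) (d := x) ⟨le_rfl, zero_le_one⟩ hx'
    have h3 := QI_bound hC okdrop (c := x) (d := 1) hx' ⟨zero_le_one, le_rfl⟩
    exact mul_le_mul (mul_le_mul h1 h2 (abs_nonneg _) hCpos.le) h3 (abs_nonneg _)
      (by positivity)
  have hsplit : (∫ a in (0:ℝ)..1, W a) = (∫ a in (0:ℝ)..τ, W a) + ∫ a in τ..1, W a := by
    rw [intervalIntegral.integral_add_adjacent_intervals
      (II_of_bound hWmeas _ _ (hWbd ⟨le_rfl, zero_le_one⟩ hτ))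
      (II_of_bound hWmeas _ _ (hWbd hτ ⟨zero_le_one, le_rfl⟩))]
  have hzero : (∫ a in τ..1, W a) = 0 := by
    rw [intervalIntegral.integral_of_le hτ.2]
    rw [MeasureTheory.setIntegral_congr_fun measurableSet_Ioc
      (g := fun _ => (0:ℝ)) (fun a ha => by
        have hna : ¬ a ≤ τ := not_le.mpr ha.1
        simp [hW, hcap, hna])]
    simp
  have htrim : (∫ a in (0:ℝ)..τ, W a)
      = ∫ a in (0:ℝ)..τ, gE j a * QI (gl.take (j:ℕ)) 0 a * QI (gl.drop ((j:ℕ)+1)) a 1 := by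
    apply intervalIntegral.integral_congr
    intro a ha
    rw [Set.uIcc_of_le hτ.1] at ha
    rw [hW]
    simp only
    rw [hcap]
    simp only [if_pos ha.2]
  rw [stepA', stepB, stepC, stepD, hsplit, hzero, add_zero, htrim]

lemma smaf {F : ℝ → ℝ} (hF : Measurable F) (l : Filter ℝ) :
    StronglyMeasurableAtFilter F l volume :=
  ⟨Set.univ, Filter.univ_mem, hF.aestronglyMeasurable.restrict⟩

variable {n : ℕ} {C : ℝ} (hC : 1 ≤ C) (gE : Fin n → ℝ → ℝ)
  (hcont : ∀ j, Continuous (gE j)) (hbd : ∀ j u, |gE j u| ≤ C)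

include hbd in
lemma okgl' (hmeas : ∀ j, Measurable (gE j)) : Ok C (List.ofFn gE) := by
  intro f hf
  rw [List.mem_ofFn] at hf
  rcases hf with ⟨i, rfl⟩
  exact ⟨hmeas i, hbd i⟩

include hC hcont hbd in
lemma derivA (k : ℕ) (hk : k < n) {a : ℝ} (ha : a ∈ Ioo (0:ℝ) 1) :
    HasDerivAt (fun x => QI ((List.ofFn gE).take (k+1)) 0 x)
      (gE ⟨k, hk⟩ a * QI ((List.ofFn gE).take k) 0 a) a := by
  have hCpos : (0:ℝ) < C := lt_of_lt_of_le one_pos hC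
  set gl := List.ofFn gE with hgl
  have okgl : Ok C gl := okgl' gE hbd (fun j => (hcont j).measurable)
  have oktake : ∀ m : ℕ, Ok C (gl.take m) := fun m f hf => okgl f (List.mem_of_mem_take hf)
  set f : ℝ → ℝ := gE ⟨k, hk⟩ with hf
  set Φ : ℝ → ℝ := fun u => f u * QI (gl.take k) 0 u with hΦ
  have hΦm : Measurable Φ :=
    (hcont _).measurable.mul
      ((QI_measurable (oktake k)).comp (measurable_const.prodMk measurable_id))
  have hΦb : ∀ x ∈ Ι (0:ℝ) a, |Φ x| ≤ C * C ^ (gl.take k).length := by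
    intro x hx
    have hx' := mem01_of_uIoc ⟨le_rfl, zero_le_one⟩ ⟨ha.1.le, ha.2.le⟩ hx
    rw [hΦ]
    simp only
    rw [abs_mul]
    exact mul_le_mul (hbd _ x) (QI_bound hC (oktake k) ⟨le_rfl, zero_le_one⟩ hx')
      (abs_nonneg _) hCpos.le
  have hΦc : ContinuousAt Φ a := by
    apply ContinuousAt.mul (hcont _).continuousAt
    exact (QI_contOn_right hC (oktake k) ⟨le_rfl, zero_le_one⟩).continuousAt
      (Icc_mem_nhds ha.1 ha.2)
  have hFTC : HasDerivAt (fun x => ∫ u in (0:ℝ)..x, Φ u) (Φ a) a :=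
    intervalIntegral.integral_hasDerivAt_right (II_of_bound hΦm _ _ hΦb)
      (smaf hΦm _) hΦc
  apply hFTC.congr_of_eventuallyEq
  have hmem : Set.Ioo (0:ℝ) 1 ∈ nhds a := isOpen_Ioo.mem_nhds ha
  filter_upwards [hmem] with x hx
  have hlen : k < gl.length := by simpa [hgl, List.length_ofFn] using hk
  have h2 : gl[k] = f := by
    rw [hf]
    exact List.getElem_ofFn (f := gE) (i := k) (by simpa [hgl, List.length_ofFn] using hk)
  have h1 : gl[k]?.toList = [f] := by
    rw [List.getElem?_eq_getElem hlen, Option.toList_some, h2]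
  have hlist : gl.take (k+1) = gl.take k ++ f :: [] := by
    rw [List.take_succ, h1]
  rw [hlist, QI_mid hC ⟨(hcont _).measurable, hbd _⟩ (fun g hg => absurd hg (by simp))
    _ (oktake k) le_rfl hx.1.le hx.2.le]
  apply intervalIntegral.integral_congr
  intro u _
  simp [hΦ, hf]

include hC hcont hbd in
lemma derivB (k : ℕ) (hk : k + 1 < n) {a : ℝ} (ha : a ∈ Ioo (0:ℝ) 1) :
    HasDerivAt (fun x => QI ((List.ofFn gE).drop (k+1)) x 1)
      (-(gE ⟨k+1, hk⟩ a * QI ((List.ofFn gE).drop (k+2)) a 1)) a := by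
  have hCpos : (0:ℝ) < C := lt_of_lt_of_le one_pos hC
  set gl := List.ofFn gE with hgl
  have okgl : Ok C gl := okgl' gE hbd (fun j => (hcont j).measurable)
  have okdrop : ∀ m : ℕ, Ok C (gl.drop m) := fun m f hf => okgl f (List.mem_of_mem_drop hf)
  set Ψ : ℝ → ℝ := fun u => gE ⟨k+1, hk⟩ u * QI (gl.drop (k+2)) u 1 with hΨ
  have hΨm : Measurable Ψ :=
    (hcont _).measurable.mul
      ((QI_measurable (okdrop (k+2))).comp (measurable_id.prodMk measurable_const))
  have hΨb : ∀ x ∈ Ι a (1:ℝ), |Ψ x| ≤ C * C ^ (gl.drop (k+2)).length := by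
    intro x hx
    have hx' := mem01_of_uIoc ⟨ha.1.le, ha.2.le⟩ ⟨zero_le_one, le_rfl⟩ hx
    rw [hΨ]
    simp only
    rw [abs_mul]
    exact mul_le_mul (hbd _ x) (QI_bound hC (okdrop (k+2)) hx' ⟨zero_le_one, le_rfl⟩)
      (abs_nonneg _) hCpos.le
  have hΨc : ContinuousAt Ψ a := by
    apply ContinuousAt.mul (hcont _).continuousAt
    exact (QI_contOn_left hC (okdrop (k+2)) ⟨zero_le_one, le_rfl⟩).continuousAt
      (Icc_mem_nhds ha.1 ha.2)
  have hlen : k + 1 < gl.length := by simpa [hgl, List.length_ofFn] using hk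
  have hdrop : gl.drop (k+1) = gE ⟨k+1, hk⟩ :: gl.drop (k+2) := by
    rw [List.drop_eq_getElem_cons hlen]
    congr 1
    exact List.getElem_ofFn (f := gE) (i := k+1) (by simpa [hgl, List.length_ofFn] using hk)
  have heq : (fun x => QI (gl.drop (k+1)) x 1) = fun x => ∫ u in x..(1:ℝ), Ψ u := by
    funext x
    rw [hdrop, QI_cons]
  rw [heq]
  exact intervalIntegral.integral_hasDerivAt_left (II_of_bound hΨm _ _ hΨb)
    (smaf hΨm _) hΨc

end S11

open S11 in
theorem stmt_11 (n : ℕ) (hn : 1 ≤ n) (l : ℝ) (ξ : Fin n → ℝ → ℝ)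
    (hC1 : ∀ j, ContDiff ℝ 1 (ξ j))
    (hder : ∀ j, ∀ s ∈ Icc (0:ℝ) 1, l ≤ deriv (ξ j) s)
    (t : ℝ) (ht : t ∈ Icc (0:ℝ) 1) :
    (∫ s in orderedSimplex n,
        ((Finset.univ.filter (fun j : Fin n => s j ≤ t)).card : ℝ) *
          Real.exp (∑ j, ξ j (s j))) /
      (∫ s in orderedSimplex n, Real.exp (∑ j, ξ j (s j))) ≤
    (n : ℝ) * piExt l t := by
  classical
  set gE : Fin n → ℝ → ℝ := fun j u => Real.exp (ξ j (max 0 (min 1 u))) with hgEdef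
  have hgEc : ∀ j, Continuous (gE j) := fun j =>
    Real.continuous_exp.comp (((hC1 j).continuous).comp clamp_cont)
  have hgEpos : ∀ j u, 0 < gE j u := fun j u => Real.exp_pos _
  have hgEeq : ∀ (j : Fin n) {u : ℝ}, u ∈ Icc (0:ℝ) 1 → gE j u = Real.exp (ξ j u) := by
    intro j u hu
    rw [hgEdef]
    simp only
    rw [clamp_eq hu]
  obtain ⟨C, hC, hbd⟩ : ∃ C : ℝ, 1 ≤ C ∧ ∀ j u, |gE j u| ≤ C := by
    have hball : ∀ j : Fin n, ∃ M : ℝ, ∀ u, |gE j u| ≤ M := by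
      intro j
      obtain ⟨M, hM⟩ := (isCompact_Icc (a := (0:ℝ)) (b := 1)).exists_bound_of_continuousOn
        (Real.continuous_exp.comp (hC1 j).continuous).continuousOn
      refine ⟨M, fun u => ?_⟩
      have := hM _ (clamp_mem u)
      simpa [hgEdef, Real.norm_eq_abs] using this
    choose M hM using hball
    refine ⟨1 + ∑ j, |M j|, le_add_of_nonneg_right (by positivity), ?_⟩
    intro j u
    calc |gE j u| ≤ M j := hM j u
      _ ≤ |M j| := le_abs_self _
      _ ≤ ∑ i, |M i| := Finset.single_le_sum (f := fun i => |M i|)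
            (fun i _ => abs_nonneg _) (Finset.mem_univ j)
      _ ≤ 1 + ∑ i, |M i| := by linarith
  have hCpos : (0:ℝ) < C := lt_of_lt_of_le one_pos hC
  set gl : List (ℝ → ℝ) := List.ofFn gE with hgl
  have okgl : Ok C gl := okgl' gE hbd (fun j => (hgEc j).measurable)
  have oktake : ∀ m, Ok C (gl.take m) := fun m f hf => okgl f (List.mem_of_mem_take hf)
  have okdrop : ∀ m, Ok C (gl.drop m) := fun m f hf => okgl f (List.mem_of_mem_drop hf)
  have glnn : ∀ f ∈ gl, ∀ x, 0 ≤ f x := by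
    intro f hf x
    rw [hgl, List.mem_ofFn] at hf
    rcases hf with ⟨i, rfl⟩
    exact (hgEpos i x).le
  set A : ℕ → ℝ → ℝ := fun k a => QI (gl.take k) 0 a with hA
  set Bf : ℕ → ℝ → ℝ := fun k a => QI (gl.drop (k+1)) a 1 with hB
  set P : Fin n → ℝ → ℝ := fun j a => gE j a * A (j:ℕ) a * Bf (j:ℕ) a with hP
  set S : ℝ → ℝ := fun a => ∑ j : Fin n, P j a with hS
  have contA : ∀ k, ContinuousOn (A k) (Icc 0 1) := fun k =>
    QI_contOn_right hC (oktake k) ⟨le_rfl, zero_le_one⟩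
  have contB : ∀ k, ContinuousOn (Bf k) (Icc 0 1) := fun k =>
    QI_contOn_left hC (okdrop (k+1)) ⟨zero_le_one, le_rfl⟩
  have contP : ∀ j, ContinuousOn (P j) (Icc 0 1) := fun j =>
    (((hgEc j).continuousOn).mul (contA _)).mul (contB _)
  have contS : ContinuousOn S (Icc 0 1) :=
    continuousOn_finset_sum _ fun j _ => contP j
  have Pnn : ∀ (j : Fin n), ∀ a ∈ Icc (0:ℝ) 1, 0 ≤ P j a := by
    intro j a ha
    apply mul_nonneg (mul_nonneg (hgEpos j a).le _) _
    · exact QI_nonneg (fun f hf x => glnn f (List.mem_of_mem_take hf) x) ha.1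
    · exact QI_nonneg (fun f hf x => glnn f (List.mem_of_mem_drop hf) x) ha.2
  have Snn : ∀ a ∈ Icc (0:ℝ) 1, 0 ≤ S a := fun a ha =>
    Finset.sum_nonneg fun j _ => Pnn j a ha
  -- the key identity, in the problem's terms
  have hOSmeas : MeasurableSet (oS n 0 1) := oS_meas
  have hkey : ∀ (j : Fin n) (τ : ℝ), τ ∈ Icc (0:ℝ) 1 →
      (∫ s in orderedSimplex n,
        (if s j ≤ τ then (1:ℝ) else 0) * Real.exp (∑ i, ξ i (s i)))
      = ∫ a in (0:ℝ)..τ, P j a := by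
    intro j τ hτ
    have step1 : (∫ s in orderedSimplex n,
          (if s j ≤ τ then (1:ℝ) else 0) * Real.exp (∑ i, ξ i (s i)))
        = ∫ s in oS n 0 1,
          (if s j ≤ τ then (1:ℝ) else 0) * Real.exp (∑ i, ξ i (s i)) :=
      MeasureTheory.setIntegral_congr_set (simplex_ae n)
    have step2 : (∫ s in oS n 0 1,
          (if s j ≤ τ then (1:ℝ) else 0) * Real.exp (∑ i, ξ i (s i)))
        = ∫ s in oS n 0 1, (if s j ≤ τ then (1:ℝ) else 0) * ∏ i, gE i (s i) := by
      apply MeasureTheory.setIntegral_congr_fun hOSmeas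
      intro s hs
      show (if s j ≤ τ then (1:ℝ) else 0) * Real.exp (∑ i, ξ i (s i))
          = (if s j ≤ τ then (1:ℝ) else 0) * ∏ i, gE i (s i)
      have : Real.exp (∑ i, ξ i (s i)) = ∏ i, gE i (s i) := by
        rw [Real.exp_sum]
        exact Finset.prod_congr rfl fun i _ =>
          (hgEeq i ⟨(hs.2 i).1.le, (hs.2 i).2.le⟩).symm
      rw [this]
    rw [step1, step2]
    exact key_lemma hC gE (fun j => (hgEc j).measurable) hbd j hτ
  -- integrability over the simplex
  have hvolS : volume (orderedSimplex n) < ⊤ := by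
    have hsub : orderedSimplex n ⊆ Set.pi Set.univ fun _ : Fin n => Icc (0:ℝ) 1 :=
      fun s hs i _ => hs.1 i
    apply lt_of_le_of_lt (measure_mono hsub)
    rw [MeasureTheory.volume_pi, Measure.pi_pi]
    simp [Real.volume_Icc]
  have hexpc : Continuous fun s : Fin n → ℝ => Real.exp (∑ i, ξ i (s i)) :=
    Real.continuous_exp.comp (continuous_finset_sum _ fun i _ =>
      (hC1 i).continuous.comp (continuous_apply i))
  have hexpbd : ∀ s ∈ orderedSimplex n, Real.exp (∑ i, ξ i (s i)) ≤ C ^ n := by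
    intro s hs
    have : Real.exp (∑ i, ξ i (s i)) = ∏ i, gE i (s i) := by
      rw [Real.exp_sum]
      exact Finset.prod_congr rfl fun i _ => (hgEeq i (hs.1 i)).symm
    rw [this]
    calc (∏ i, gE i (s i)) ≤ ∏ _i : Fin n, C :=
          Finset.prod_le_prod (fun i _ => (hgEpos i _).le)
            (fun i _ => (le_abs_self _).trans (hbd i _))
      _ = C ^ n := by rw [Finset.prod_const, Finset.card_univ, Fintype.card_fin]
  have hInt : ∀ g : (Fin n → ℝ) → ℝ, Measurable g → (∀ s, |g s| ≤ 1) →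
      IntegrableOn (fun s => g s * Real.exp (∑ i, ξ i (s i))) (orderedSimplex n) volume := by
    intro g hg hgb
    apply Measure.integrableOn_of_bounded (M := C ^ n) hvolS.ne
      (hg.mul hexpc.measurable).aestronglyMeasurable
    apply (ae_restrict_iff' orderedSimplex_meas).mpr
    apply ae_of_all
    intro s hs
    rw [Real.norm_eq_abs, Pi.mul_apply, abs_mul, abs_of_pos (Real.exp_pos _)]
    calc |g s| * Real.exp (∑ i, ξ i (s i)) ≤ 1 * (C ^ n) := by
          apply mul_le_mul (hgb s) (hexpbd s hs) (Real.exp_pos _).le zero_le_one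
      _ = C ^ n := one_mul _
  -- numerator
  have hcard : ∀ s : Fin n → ℝ,
      ((Finset.univ.filter (fun j : Fin n => s j ≤ t)).card : ℝ)
        = ∑ j : Fin n, (if s j ≤ t then (1:ℝ) else 0) := by
    intro s
    rw [Finset.card_filter]
    push_cast
    rfl
  have hnum : (∫ s in orderedSimplex n,
        ((Finset.univ.filter (fun j : Fin n => s j ≤ t)).card : ℝ) *
          Real.exp (∑ i, ξ i (s i)))
      = ∫ a in (0:ℝ)..t, S a := by
    have e1 : (∫ s in orderedSimplex n,
          ((Finset.univ.filter (fun j : Fin n => s j ≤ t)).card : ℝ) *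
            Real.exp (∑ i, ξ i (s i)))
        = ∫ s in orderedSimplex n,
            ∑ j : Fin n, (if s j ≤ t then (1:ℝ) else 0) * Real.exp (∑ i, ξ i (s i)) := by
      apply MeasureTheory.setIntegral_congr_fun orderedSimplex_meas
      intro s _
      show ((Finset.univ.filter (fun j : Fin n => s j ≤ t)).card : ℝ) *
          Real.exp (∑ i, ξ i (s i))
        = ∑ j : Fin n, (if s j ≤ t then (1:ℝ) else 0) * Real.exp (∑ i, ξ i (s i))
      rw [hcard, Finset.sum_mul]
    rw [e1, MeasureTheory.integral_finset_sum _ (fun j _ => hInt _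
      (Measurable.ite (measurableSet_le (measurable_pi_apply j) measurable_const)
        measurable_const measurable_const)
      (fun s => by by_cases h : s j ≤ t <;> simp [h]))]
    have e2 : ∀ j : Fin n, (∫ s in orderedSimplex n,
          (if s j ≤ t then (1:ℝ) else 0) * Real.exp (∑ i, ξ i (s i)))
        = ∫ a in (0:ℝ)..t, P j a := fun j => hkey j t ht
    rw [Finset.sum_congr rfl fun j _ => e2 j]
    rw [← intervalIntegral.integral_finset_sum]
    intro j _
    exact ((contP j).mono (by rw [Set.uIcc_of_le ht.1]; exact Icc_subset_Icc le_rfl ht.2)).intervalIntegrable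
  -- denominator
  set D : ℝ := ∫ s in orderedSimplex n, Real.exp (∑ i, ξ i (s i)) with hD
  have hden : ∀ j : Fin n, D = ∫ a in (0:ℝ)..1, P j a := by
    intro j
    rw [← hkey j 1 ⟨zero_le_one, le_rfl⟩, hD]
    apply MeasureTheory.setIntegral_congr_fun orderedSimplex_meas
    intro s hs
    show Real.exp (∑ i, ξ i (s i))
        = (if s j ≤ 1 then (1:ℝ) else 0) * Real.exp (∑ i, ξ i (s i))
    rw [if_pos (hs.1 j).2, one_mul]
  have hnD : (n : ℝ) * D = ∫ a in (0:ℝ)..1, S a := by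
    have : (n : ℝ) * D = ∑ _j : Fin n, D := by
      rw [Finset.sum_const, Finset.card_univ, Fintype.card_fin, nsmul_eq_mul]
    rw [this, Finset.sum_congr rfl fun j _ => hden j,
      ← intervalIntegral.integral_finset_sum]
    intro j _
    exact ((contP j).mono (by rw [Set.uIcc_of_le zero_le_one])).intervalIntegrable
  -- positivity of D
  have hDpos : 0 < D := by
    rw [hD]
    rw [MeasureTheory.setIntegral_pos_iff_support_of_nonneg_ae
      (ae_of_all _ fun s => (Real.exp_pos _).le)
      (by simpa using hInt (fun _ => 1) measurable_const (fun s => by norm_num))]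
    have hsupp : Function.support (fun s : Fin n → ℝ => Real.exp (∑ i, ξ i (s i)))
        ∩ orderedSimplex n = orderedSimplex n := by
      apply Set.inter_eq_self_of_subset_right
      intro s _
      exact Real.exp_ne_zero _
    rw [hsupp]
    calc (0:ENNReal) < volume (oS n 0 1) := oS_open.measure_pos volume oS_nonempty
      _ ≤ volume (orderedSimplex n) := measure_mono fun s hs =>
          ⟨fun j => ⟨(hs.2 j).1.le, (hs.2 j).2.le⟩, hs.1⟩
  -- derivative of S at interior points
  set gN : ℕ → ℝ → ℝ := fun k => if hk : k < n then gE ⟨k, hk⟩ else fun _ => 0 with hgN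
  have hgNlt : ∀ (k : ℕ) (hk : k < n), gN k = gE ⟨k, hk⟩ := by
    intro k hk
    simp only [hgN, dif_pos hk]
  have hgNj : ∀ j : Fin n, gN (j:ℕ) = gE j := by
    intro j
    rw [hgNlt _ j.isLt]
  have hA0 : A 0 = fun _ => (1:ℝ) := by
    funext x
    simp only [hA, List.take_zero, QI_nil]
  have hBtop : Bf (n-1) = fun _ => (1:ℝ) := by
    funext x
    simp only [hB]
    rw [List.drop_eq_nil_of_le (by rw [hgl, List.length_ofFn]; omega), QI_nil]
  have hSder : ∀ a ∈ Ioo (0:ℝ) 1,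
      HasDerivAt S (∑ j : Fin n, deriv (ξ j) a * P j a) a := by
    intro a ha
    set R : ℕ → ℝ := fun k =>
      if k = 0 then 0 else gN (k-1) a * gN k a * A (k-1) a * Bf k a with hR
    have hgj : ∀ j : Fin n, HasDerivAt (gE j) (gE j a * deriv (ξ j) a) a := by
      intro j
      have hd : HasDerivAt (ξ j) (deriv (ξ j) a) a :=
        (((hC1 j).differentiable one_ne_zero) a).hasDerivAt
      have h2 : HasDerivAt (fun x => Real.exp (ξ j x))
          (Real.exp (ξ j a) * deriv (ξ j) a) a := hd.exp
      have h3 : HasDerivAt (gE j) (Real.exp (ξ j a) * deriv (ξ j) a) a := by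
        apply h2.congr_of_eventuallyEq
        filter_upwards [isOpen_Ioo.mem_nhds ha] with x hx
        exact hgEeq j ⟨hx.1.le, hx.2.le⟩
      rwa [← hgEeq j ⟨ha.1.le, ha.2.le⟩] at h3
    have hPder : ∀ j : Fin n,
        HasDerivAt (P j) (deriv (ξ j) a * P j a + (R (j:ℕ) - R ((j:ℕ)+1))) a := by
      intro j
      have hPj : P j = fun x => gE j x * A (j:ℕ) x * Bf (j:ℕ) x := rfl
      -- A-derivative
      have hAj : HasDerivAt (A (j:ℕ))
          (if h0 : (j:ℕ) = 0 then 0 else gN ((j:ℕ)-1) a * A ((j:ℕ)-1) a) a := by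
        by_cases h0 : (j:ℕ) = 0
        · rw [dif_pos h0, h0, hA0]
          exact hasDerivAt_const a 1
        · rw [dif_neg h0]
          have hlt : (j:ℕ) - 1 < n := by have := j.isLt; omega
          have hstep := derivA hC gE hgEc hbd ((j:ℕ) - 1) hlt ha
          have hs1 : (j:ℕ) - 1 + 1 = (j:ℕ) := by omega
          rw [hs1] at hstep
          rw [hgNlt _ hlt]
          exact hstep
      -- B-derivative
      have hBj : HasDerivAt (Bf (j:ℕ))
          (if h1 : (j:ℕ) + 1 = n then 0 else -(gN ((j:ℕ)+1) a * Bf ((j:ℕ)+1) a)) a := by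
        by_cases h1 : (j:ℕ) + 1 = n
        · rw [dif_pos h1]
          have : (j:ℕ) = n - 1 := by omega
          rw [this, hBtop]
          exact hasDerivAt_const a 1
        · rw [dif_neg h1]
          have hlt : (j:ℕ) + 1 < n := by have := j.isLt; omega
          have hstep := derivB hC gE hgEc hbd (j:ℕ) hlt ha
          rw [hgNlt _ hlt]
          exact hstep
      have hcomb := ((hgj j).mul hAj).mul hBj
      have hval : (gE j a * deriv (ξ j) a * A (j:ℕ) a
            + gE j a * (if h0 : (j:ℕ) = 0 then 0 else gN ((j:ℕ)-1) a * A ((j:ℕ)-1) a))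
              * Bf (j:ℕ) a
          + gE j a * A (j:ℕ) a
              * (if h1 : (j:ℕ) + 1 = n then 0 else -(gN ((j:ℕ)+1) a * Bf ((j:ℕ)+1) a))
          = deriv (ξ j) a * P j a + (R (j:ℕ) - R ((j:ℕ)+1)) := by
        have hRj : R (j:ℕ)
            = if (j:ℕ) = 0 then 0
              else gN ((j:ℕ)-1) a * gN (j:ℕ) a * A ((j:ℕ)-1) a * Bf (j:ℕ) a := by
          simp only [hR]
        have hRj1 : R ((j:ℕ)+1)
            = gN (j:ℕ) a * gN ((j:ℕ)+1) a * A (j:ℕ) a * Bf ((j:ℕ)+1) a := by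
          simp only [hR, Nat.add_sub_cancel, if_neg (Nat.succ_ne_zero (j:ℕ))]
        have hgNja : gN (j:ℕ) a = gE j a := by rw [hgNj]
        by_cases h0 : (j:ℕ) = 0 <;> by_cases h1 : (j:ℕ) + 1 = n
        · have hRn : R ((j:ℕ)+1) = 0 := by
            rw [hRj1]
            have : gN ((j:ℕ)+1) a = 0 := by
              simp only [hgN, dif_neg (by omega : ¬((j:ℕ)+1 < n))]
            rw [this]
            ring
          rw [dif_pos h0, dif_pos h1, hRj, if_pos h0, hRn, hPj]
          ring
        · rw [dif_pos h0, dif_neg h1, hRj, if_pos h0, hRj1, hgNja, hPj]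
          ring
        · have hRn : R ((j:ℕ)+1) = 0 := by
            rw [hRj1]
            have : gN ((j:ℕ)+1) a = 0 := by
              simp only [hgN, dif_neg (by omega : ¬((j:ℕ)+1 < n))]
            rw [this]
            ring
          rw [dif_neg h0, dif_pos h1, hRj, if_neg h0, hRn, hgNja, hPj]
          ring
        · rw [dif_neg h0, dif_neg h1, hRj, if_neg h0, hRj1, hgNja, hPj]
          ring
      rw [← hval]
      exact hcomb
    have hsum := HasDerivAt.sum (u := Finset.univ)
      (fun j (_ : j ∈ Finset.univ) => hPder j)
    have htel : (∑ j : Fin n, (deriv (ξ j) a * P j a + (R (j:ℕ) - R ((j:ℕ)+1))))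
        = ∑ j : Fin n, deriv (ξ j) a * P j a := by
      rw [Finset.sum_add_distrib]
      have e1 : (∑ j : Fin n, (R (j:ℕ) - R ((j:ℕ)+1)))
          = ∑ k ∈ Finset.range n, (R k - R (k+1)) :=
        Fin.sum_univ_eq_sum_range (fun k => R k - R (k+1)) n
      rw [e1, Finset.sum_range_sub' R n]
      have hR0 : R 0 = 0 := by simp only [hR, if_pos rfl]
      have hRn : R n = 0 := by
        have hgNn : gN n a = 0 := by
          simp only [hgN, dif_neg (lt_irrefl n)]
        simp only [hR, if_neg (by omega : ¬(n = 0)), hgNn]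
        ring
      rw [hR0, hRn]
      ring
    rw [htel] at hsum
    have e : S = ∑ i, P i := by funext x; simp only [hS, Finset.sum_apply]
    rw [e]; exact hsum
  -- monotone auxiliary function
  set h : ℝ → ℝ := fun a => Real.exp (-(l * a)) * S a with hh
  have hhder : ∀ a ∈ Ioo (0:ℝ) 1,
      HasDerivAt h (Real.exp (-(l * a)) * ∑ j : Fin n, (deriv (ξ j) a - l) * P j a) a := by
    intro a ha
    have hexp : HasDerivAt (fun x : ℝ => Real.exp (-(l * x))) (Real.exp (-(l * a)) * (-l)) a := by
      have h1 : HasDerivAt (fun x : ℝ => -(l * x)) (-(l * 1)) a :=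
        ((hasDerivAt_id a).const_mul l).neg
      simp only [mul_one] at h1
      exact h1.exp
    have := hexp.mul (hSder a ha)
    apply this.congr_deriv
    rw [hS]
    simp only
    rw [Finset.mul_sum, Finset.mul_sum, Finset.mul_sum]
    rw [← Finset.sum_add_distrib]
    apply Finset.sum_congr rfl
    intro j _
    ring
  have hmono : MonotoneOn h (Icc 0 1) := by
    apply monotoneOn_of_deriv_nonneg (convex_Icc 0 1)
    · exact ((Real.continuous_exp.comp (continuous_const.mul continuous_id).neg).continuousOn).mul contS
    · intro x hx
      rw [interior_Icc] at hx
      exact (hhder x hx).differentiableAt.differentiableWithinAt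
    · intro x hx
      rw [interior_Icc] at hx
      rw [(hhder x hx).deriv]
      apply mul_nonneg (Real.exp_pos _).le
      apply Finset.sum_nonneg
      intro j _
      apply mul_nonneg _ (Pnn j x ⟨hx.1.le, hx.2.le⟩)
      have := hder j x ⟨hx.1.le, hx.2.le⟩
      linarith
  -- Chebyshev-type bound
  set w : ℝ → ℝ := fun a => Real.exp (l * a) with hw
  have hwc : Continuous w := Real.continuous_exp.comp (continuous_const.mul continuous_id)
  have hSwh : ∀ a, S a = w a * h a := by
    intro a
    rw [hh, hw]
    simp only
    rw [← mul_assoc, ← Real.exp_add]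
    simp
  set W₁ : ℝ := ∫ a in (0:ℝ)..t, w a with hW₁
  set W₂ : ℝ := ∫ a in t..(1:ℝ), w a with hW₂
  have hW1nn : 0 ≤ W₁ :=
    intervalIntegral.integral_nonneg ht.1 fun a _ => (Real.exp_pos _).le
  have hW2nn : 0 ≤ W₂ :=
    intervalIntegral.integral_nonneg ht.2 fun a _ => (Real.exp_pos _).le
  have hWsum : W₁ + W₂ = ∫ a in (0:ℝ)..1, w a :=
    intervalIntegral.integral_add_adjacent_intervals
      (hwc.intervalIntegrable _ _) (hwc.intervalIntegrable _ _)
  have hWpos : 0 < W₁ + W₂ := by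
    rw [hWsum]
    exact intervalIntegral.intervalIntegral_pos_of_pos_on
      (hwc.intervalIntegrable _ _) (fun x _ => Real.exp_pos _) one_pos
  have hSint : ∀ a b : ℝ, a ∈ Icc (0:ℝ) 1 → b ∈ Icc (0:ℝ) 1 →
      IntervalIntegrable S volume a b := by
    intro a b ha hb
    exact (contS.mono (Set.uIcc_subset_Icc ha hb)).intervalIntegrable
  set c₁ : ℝ := ∫ a in (0:ℝ)..t, S a with hc₁
  set c₂ : ℝ := ∫ a in t..(1:ℝ), S a with hc₂
  have hc1c2 : (∫ a in (0:ℝ)..1, S a) = c₁ + c₂ :=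
    (intervalIntegral.integral_add_adjacent_intervals
      (hSint 0 t ⟨le_rfl, zero_le_one⟩ ht) (hSint t 1 ht ⟨zero_le_one, le_rfl⟩)).symm
  have hht : 0 ≤ h t := by
    rw [hh]
    exact mul_nonneg (Real.exp_pos _).le (Snn t ht)
  have h1 : c₁ ≤ h t * W₁ := by
    have hmon : c₁ ≤ ∫ a in (0:ℝ)..t, w a * h t := by
      rw [hc₁]
      apply intervalIntegral.integral_mono_on ht.1 (hSint 0 t ⟨le_rfl, zero_le_one⟩ ht)
        ((hwc.mul continuous_const).intervalIntegrable _ _)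
      intro x hx
      rw [hSwh x]
      have hx1 : x ∈ Icc (0:ℝ) 1 := ⟨hx.1, hx.2.trans ht.2⟩
      exact mul_le_mul_of_nonneg_left (hmono hx1 ht hx.2) (Real.exp_pos _).le
    calc c₁ ≤ ∫ a in (0:ℝ)..t, w a * h t := hmon
      _ = W₁ * h t := intervalIntegral.integral_mul_const _ _
      _ = h t * W₁ := mul_comm _ _
  have h2 : h t * W₂ ≤ c₂ := by
    have hmon : (∫ a in t..(1:ℝ), w a * h t) ≤ c₂ := by
      rw [hc₂]
      apply intervalIntegral.integral_mono_on ht.2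
        ((hwc.mul continuous_const).intervalIntegrable _ _)
        (hSint t 1 ht ⟨zero_le_one, le_rfl⟩)
      intro x hx
      rw [hSwh x]
      have hx1 : x ∈ Icc (0:ℝ) 1 := ⟨ht.1.trans hx.1, hx.2⟩
      exact mul_le_mul_of_nonneg_left (hmono ht hx1 hx.1) (Real.exp_pos _).le
    calc h t * W₂ = ∫ a in t..(1:ℝ), w a * h t := by
          rw [intervalIntegral.integral_mul_const]; ring
      _ ≤ c₂ := hmon
  have hphi : piExt l t = W₁ / (W₁ + W₂) := by
    by_cases hl : l = 0
    · subst hl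
      have hw1 : W₁ = t := by
        rw [hW₁]
        simp [hw]
      have hw12 : W₁ + W₂ = 1 := by
        rw [hWsum]
        simp [hw]
      rw [piExt, if_pos rfl, hw12, hw1, div_one]
    · have hFTC : ∀ b c : ℝ, (∫ a in b..c, w a)
          = Real.exp (l * c) / l - Real.exp (l * b) / l := by
        intro b c
        apply intervalIntegral.integral_eq_sub_of_hasDerivAt
        · intro x _
          have hd1 : HasDerivAt (fun x : ℝ => l * x) (l * 1) x := (hasDerivAt_id x).const_mul l
          simp only [mul_one] at hd1
          have hd3 := hd1.exp.div_const l
          rw [hw]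
          exact hd3.congr_deriv (by simp [hl])
        · exact hwc.intervalIntegrable _ _
      have hexpl1 : Real.exp l - 1 ≠ 0 := by
        intro hcon
        apply hl
        have : Real.exp l = 1 := by linarith
        exact (Real.exp_eq_one_iff l).mp this
      have hv1 : W₁ = (Real.exp (l * t) - 1) / l := by
        rw [hW₁, hFTC, div_sub_div_same, mul_zero, Real.exp_zero]
      have hv12 : W₁ + W₂ = (Real.exp l - 1) / l := by
        rw [hWsum, hFTC, div_sub_div_same, mul_zero, Real.exp_zero, mul_one]
      rw [piExt, if_neg hl, hv12, hv1]
      field_simp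
  have hcheb : c₁ ≤ piExt l t * (c₁ + c₂) := by
    rw [hphi, div_mul_eq_mul_div, le_div_iff₀ hWpos]
    nlinarith [mul_le_mul_of_nonneg_right h1 hW2nn, mul_le_mul_of_nonneg_left h2 hW1nn]
  rw [div_le_iff₀ hDpos, hnum]
  calc c₁ ≤ piExt l t * (c₁ + c₂) := hcheb
    _ = piExt l t * ∫ a in (0:ℝ)..1, S a := by rw [hc1c2]
    _ = piExt l t * ((n:ℝ) * D) := by rw [hnD]
    _ = (n:ℝ) * piExt l t * D := by ring
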